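/- The expected trace-norm error of k-DPP sampling equals (k+1)·e_{k+1}(λ)/e_k(λ): if a subset S of size k is drawn with probability det A(S,S) / Σ_{|S'|=k} det A(S',S'), then E[tr(A - Â)] = (k+1) e_{k+1}(λ₁(A),…,λ_N(A)) / e_k(λ₁(A),…,λ_N(A)), where Â = A(:,S)A(S,S)†A(S,:) is the Nyström approximation. -/

import Mathlib

open Matrix

/-- The principal submatrix `A(S,S)`. -/
def subSS {N : ℕ} (A : Matrix (Fin N) (Fin N) ℝ) (S : Finset (Fin N)) :
    Matrix {x // x ∈ S} {x // x ∈ S} ℝ :=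
  A.submatrix Subtype.val Subtype.val

/-- The column submatrix `A(:,S)`. -/
def subCols {N : ℕ} (A : Matrix (Fin N) (Fin N) ℝ) (S : Finset (Fin N)) :
    Matrix (Fin N) {x // x ∈ S} ℝ :=
  A.submatrix id Subtype.val

/-- The row submatrix `A(S,:)`. -/
def subRows {N : ℕ} (A : Matrix (Fin N) (Fin N) ℝ) (S : Finset (Fin N)) :
    Matrix {x // x ∈ S} (Fin N) ℝ :=
  A.submatrix Subtype.val id

section Auxiliary

open Finset Equiv


variable {k N : ℕ}

/-- the enumeration of a `k`-subset of `Fin N`. -/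
noncomputable def embT (T : {T // T ∈ Finset.powersetCard k (Finset.univ : Finset (Fin N))}) :
    Fin k → Fin N :=
  fun i => T.1.orderEmbOfFin (Finset.mem_powersetCard.mp T.2).2 i

lemma embT_injective (T : {T // T ∈ Finset.powersetCard k (Finset.univ : Finset (Fin N))}) :
    Function.Injective (embT T) :=
  fun a b h => (T.1.orderEmbOfFin (Finset.mem_powersetCard.mp T.2).2).injective h

lemma embT_mem (T : {T // T ∈ Finset.powersetCard k (Finset.univ : Finset (Fin N))}) (i : Fin k) :
    embT T i ∈ T.1 :=
  Finset.orderEmbOfFin_mem _ _ _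

lemma image_embT (T : {T // T ∈ Finset.powersetCard k (Finset.univ : Finset (Fin N))}) :
    Finset.image (embT T) Finset.univ = T.1 := by
  ext x
  simp only [Finset.mem_image, Finset.mem_univ, true_and]
  constructor
  · rintro ⟨i, rfl⟩; exact embT_mem T i
  · intro hx
    have : x ∈ Set.range (T.1.orderEmbOfFin (Finset.mem_powersetCard.mp T.2).2) := by
      rw [Finset.range_orderEmbOfFin]; exact hx
    obtain ⟨i, hi⟩ := this
    exact ⟨i, hi⟩

lemma prod_embT {M : Type*} [CommMonoid M]
    (T : {T // T ∈ Finset.powersetCard k (Finset.univ : Finset (Fin N))}) (f : Fin N → M) :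
    ∏ i : Fin k, f (embT T i) = ∏ x ∈ T.1, f x := by
  rw [← image_embT T, Finset.prod_image (fun a _ b _ h => embT_injective T h)]

/-- The subset associated to an injective function `Fin k → Fin N`. -/
noncomputable def setOf' (p : Fin k → Fin N) (hp : Function.Injective p) :
    {T // T ∈ Finset.powersetCard k (Finset.univ : Finset (Fin N))} :=
  ⟨Finset.image p Finset.univ, Finset.mem_powersetCard.mpr ⟨Finset.subset_univ _, by
    rw [Finset.card_image_of_injective _ hp, Finset.card_univ, Fintype.card_fin]⟩⟩

/-- The permutation associated to an injective function `Fin k → Fin N`. -/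
noncomputable def permOf (p : Fin k → Fin N) (hp : Function.Injective p) : Perm (Fin k) := by
  have hcard : (Finset.image p Finset.univ).card = k := by
    rw [Finset.card_image_of_injective _ hp, Finset.card_univ, Fintype.card_fin]
  have e2 : Fin k ≃ {x // x ∈ Finset.image p Finset.univ} := by
    refine Equiv.ofBijective
      (fun i => ⟨p i, Finset.mem_image_of_mem p (Finset.mem_univ i)⟩) ?_
    rw [Fintype.bijective_iff_injective_and_card]
    exact ⟨fun a b hab => hp (congrArg Subtype.val hab),
      by rw [Fintype.card_coe, hcard, Fintype.card_fin]⟩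
  exact e2.trans ((Finset.image p Finset.univ).orderIsoOfFin hcard).toEquiv.symm

lemma embT_permOf (p : Fin k → Fin N) (hp : Function.Injective p) (i : Fin k) :
    embT (setOf' p hp) (permOf p hp i) = p i := by
  have hcard : (Finset.image p Finset.univ).card = k := by
    rw [Finset.card_image_of_injective _ hp, Finset.card_univ, Fintype.card_fin]
  show (Finset.image p Finset.univ).orderEmbOfFin hcard _ = p i
  rw [← Finset.coe_orderIsoOfFin_apply]
  simp only [permOf, Equiv.trans_apply, OrderIso.toEquiv_symm, RelIso.coe_fn_toEquiv]
  erw [OrderIso.apply_symm_apply]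
  rfl

lemma embT_eq_of_val_eq {T T' : {T // T ∈ Finset.powersetCard k (Finset.univ : Finset (Fin N))}}
    (h : T.1 = T'.1) : embT T = embT T' := by
  cases Subtype.ext h
  rfl

theorem cauchyBinet (P : Matrix (Fin k) (Fin N) ℝ) (Q : Matrix (Fin N) (Fin k) ℝ) :
    (P * Q).det = ∑ T ∈ (Finset.powersetCard k (Finset.univ : Finset (Fin N))).attach,
      (P.submatrix id (embT T)).det * (Q.submatrix (embT T) id).det := by
  classical
  have step1 : (P * Q).det =
      ∑ p : Fin k → Fin N, (∏ i, Q (p i) i) * (P.submatrix id p).det := by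
    calc (P * Q).det
        = ∑ p : Fin k → Fin N, ∑ σ : Perm (Fin k),
            (Equiv.Perm.sign σ : ℝ) * ∏ i, P (σ i) (p i) * Q (p i) i := by
          simp only [det_apply', mul_apply, prod_univ_sum, mul_sum, Fintype.piFinset_univ]
          rw [Finset.sum_comm]
      _ = _ := by
          refine Finset.sum_congr rfl fun p _ => ?_
          rw [det_apply', Finset.mul_sum]
          refine Finset.sum_congr rfl fun σ _ => ?_
          simp only [submatrix_apply, id_eq, Finset.prod_mul_distrib]
          ring
  have step2 : ∑ p : Fin k → Fin N, (∏ i, Q (p i) i) * (P.submatrix id p).det =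
      ∑ p ∈ Finset.univ.filter (fun p : Fin k → Fin N => Function.Injective p),
        (∏ i, Q (p i) i) * (P.submatrix id p).det := by
    refine (Finset.sum_filter_of_ne fun p _ hne => ?_).symm
    by_contra hinj
    apply hne
    obtain ⟨i, j, hpij, hij⟩ : ∃ i j, p i = p j ∧ i ≠ j := by
      rw [Function.Injective] at hinj
      push_neg at hinj
      exact hinj
    have : (P.submatrix id p).det = 0 := by
      rw [← Matrix.det_transpose]
      refine Matrix.det_zero_of_row_eq hij ?_
      ext x
      simp [hpij]
    rw [this, mul_zero]
  have step3 : ∑ p ∈ Finset.univ.filter (fun p : Fin k → Fin N => Function.Injective p),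
        (∏ i, Q (p i) i) * (P.submatrix id p).det =
      ∑ x ∈ (Finset.powersetCard k (Finset.univ : Finset (Fin N))).attach ×ˢ
          (Finset.univ : Finset (Perm (Fin k))),
        (∏ i, Q (embT x.1 (x.2 i)) i) * (P.submatrix id (embT x.1 ∘ x.2)).det := by
    have hinj : ∀ p ∈ Finset.univ.filter (fun p : Fin k → Fin N => Function.Injective p),
        Function.Injective p := fun p hp => by simpa using (Finset.mem_filter.mp hp).2
    refine Finset.sum_bij' (fun p hp => (setOf' p (hinj p hp), permOf p (hinj p hp)))
      (fun x _ => embT x.1 ∘ x.2) (fun p hp => by simp [Finset.mem_product])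
      (fun x hx => ?_) (fun p hp => ?_) (fun x hx => ?_) (fun p hp => ?_)
    · simp only [Finset.mem_filter, Finset.mem_univ, true_and]
      exact (embT_injective x.1).comp x.2.injective
    · funext i
      exact embT_permOf p (hinj p hp) i
    · -- i (j x) = x
      have hpinj : Function.Injective (embT x.1 ∘ x.2) :=
        (embT_injective x.1).comp x.2.injective
      have hval : (setOf' (embT x.1 ∘ x.2) hpinj).1 = x.1.1 := by
        show Finset.image (embT x.1 ∘ x.2) Finset.univ = x.1.1
        rw [← Finset.image_image, Finset.image_univ_equiv, image_embT]
      have h1 : setOf' (embT x.1 ∘ x.2) hpinj = x.1 := Subtype.ext hval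
      refine Prod.ext ?_ ?_
      · exact h1
      · show permOf (embT x.1 ∘ x.2) hpinj = x.2
        refine Equiv.ext fun i => ?_
        apply embT_injective x.1
        have := embT_permOf (embT x.1 ∘ x.2) hpinj i
        rwa [embT_eq_of_val_eq hval] at this
    · -- values agree
      have h := embT_permOf p (hinj p hp)
      simp only []
      congr 1
      · refine Finset.prod_congr rfl fun i _ => ?_
        rw [h i]
      · have : embT (setOf' p (hinj p hp)) ∘ (permOf p (hinj p hp)) = p := funext h
        rw [this]
  rw [step1, step2, step3, Finset.sum_product]
  refine Finset.sum_congr rfl fun T _ => ?_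
  have key : ∀ τ : Perm (Fin k),
      (P.submatrix id (embT T ∘ τ)).det =
        (Equiv.Perm.sign τ : ℝ) * (P.submatrix id (embT T)).det := by
    intro τ
    have : P.submatrix id (embT T ∘ τ) = (P.submatrix id (embT T)).submatrix id τ := by
      rw [Matrix.submatrix_submatrix]
      rfl
    rw [this, Matrix.det_permute']
  calc ∑ τ : Perm (Fin k), (∏ i, Q (embT T (τ i)) i) * (P.submatrix id (embT T ∘ τ)).det
      = (P.submatrix id (embT T)).det *
        ∑ τ : Perm (Fin k), (Equiv.Perm.sign τ : ℝ) *
          ∏ i, (Q.submatrix (embT T) id) (τ i) i := by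
        rw [Finset.mul_sum]
        refine Finset.sum_congr rfl fun τ _ => ?_
        rw [key τ]
        simp only [submatrix_apply, id_eq]
        ring
    _ = _ := by rw [← det_apply']

lemma det_subSS_attach (A : Matrix (Fin N) (Fin N) ℝ)
    (S : {T // T ∈ Finset.powersetCard k (Finset.univ : Finset (Fin N))}) :
    (subSS A S.1).det = (A.submatrix (embT S) (embT S)).det := by
  have hcard := (Finset.mem_powersetCard.mp S.2).2
  rw [← Matrix.det_submatrix_equiv_self (S.1.orderIsoOfFin hcard).toEquiv (subSS A S.1)]
  congr 1

lemma submatrix_one_inj {f : Fin k → Fin N} (hf : Function.Injective f) :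
    (1 : Matrix (Fin N) (Fin N) ℝ).submatrix f f = 1 := by
  ext a b
  simp only [submatrix_apply, Matrix.one_apply, hf.eq_iff]

theorem sum_minors_eq_esymm (A : Matrix (Fin N) (Fin N) ℝ) (hA : A.IsHermitian) :
    ∑ S ∈ Finset.powersetCard k (Finset.univ : Finset (Fin N)), (subSS A S).det
      = ∑ T ∈ Finset.powersetCard k (Finset.univ : Finset (Fin N)),
          ∏ i ∈ T, hA.eigenvalues i := by
  classical
  set U : Matrix (Fin N) (Fin N) ℝ := (hA.eigenvectorUnitary : Matrix (Fin N) (Fin N) ℝ) with hU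
  set d : Fin N → ℝ := hA.eigenvalues with hd
  have hspec : A = U * (Matrix.diagonal d * star U) := by
    have := hA.spectral_theorem
    rw [Unitary.conjStarAlgAut_apply] at this
    rw [Matrix.mul_assoc] at this
    convert this using 3
    exact congrArg Matrix.diagonal (funext fun i => by simp [hd])
  have hUU : star U * U = 1 := Matrix.UnitaryGroup.star_mul_self _
  rw [← Finset.sum_attach (Finset.powersetCard k (Finset.univ : Finset (Fin N)))
    (fun S => (subSS A S).det)]
  rw [← Finset.sum_attach (Finset.powersetCard k (Finset.univ : Finset (Fin N)))
    (fun T => ∏ i ∈ T, hA.eigenvalues i)]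
  have key : ∀ S : {T // T ∈ Finset.powersetCard k (Finset.univ : Finset (Fin N))},
      (subSS A S.1).det = ∑ T ∈ (Finset.powersetCard k (Finset.univ : Finset (Fin N))).attach,
        (U.submatrix (embT S) (embT T)).det *
          ((∏ i ∈ T.1, d i) * ((star U).submatrix (embT T) (embT S)).det) := by
    intro S
    rw [det_subSS_attach]
    have hsub : A.submatrix (embT S) (embT S) =
        (U.submatrix (embT S) id) * ((Matrix.diagonal d * star U).submatrix id (embT S)) := by
      have h2 := Matrix.submatrix_mul_equiv U (Matrix.diagonal d * star U)
        (embT S) (Equiv.refl (Fin N)) (embT S)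
      simp only [Equiv.coe_refl] at h2
      rw [hspec, ← h2]
    rw [hsub, cauchyBinet]
    refine Finset.sum_congr rfl fun T _ => ?_
    rw [Matrix.submatrix_submatrix, Matrix.submatrix_submatrix]
    simp only [Function.comp_id, Function.id_comp]
    congr 1
    have hdm : (Matrix.diagonal d * star U).submatrix (embT T) (embT S) =
        Matrix.diagonal (d ∘ embT T) * ((star U).submatrix (embT T) (embT S)) := by
      ext a b
      simp [Matrix.diagonal_mul]
    rw [hdm, Matrix.det_mul, Matrix.det_diagonal]
    congr 1
    rw [← prod_embT T d]
    rfl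
  calc ∑ S ∈ (Finset.powersetCard k (Finset.univ : Finset (Fin N))).attach, (subSS A S.1).det
      = ∑ S ∈ (Finset.powersetCard k (Finset.univ : Finset (Fin N))).attach,
          ∑ T ∈ (Finset.powersetCard k (Finset.univ : Finset (Fin N))).attach,
        (U.submatrix (embT S) (embT T)).det *
          ((∏ i ∈ T.1, d i) * ((star U).submatrix (embT T) (embT S)).det) :=
        Finset.sum_congr rfl fun S _ => key S
    _ = ∑ T ∈ (Finset.powersetCard k (Finset.univ : Finset (Fin N))).attach,
          (∏ i ∈ T.1, d i) * ∑ S ∈ (Finset.powersetCard k (Finset.univ : Finset (Fin N))).attach,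
            (((star U).submatrix (embT T) id).submatrix id (embT S)).det *
              ((U.submatrix id (embT T)).submatrix (embT S) id).det := by
        rw [Finset.sum_comm]
        refine Finset.sum_congr rfl fun T _ => ?_
        rw [Finset.mul_sum]
        refine Finset.sum_congr rfl fun S _ => ?_
        rw [Matrix.submatrix_submatrix, Matrix.submatrix_submatrix]
        simp only [Function.comp_id, Function.id_comp]
        ring
    _ = ∑ T ∈ (Finset.powersetCard k (Finset.univ : Finset (Fin N))).attach, (∏ i ∈ T.1, d i) := by
        refine Finset.sum_congr rfl fun T _ => ?_
        rw [← cauchyBinet ((star U).submatrix (embT T) id) (U.submatrix id (embT T))]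
        have h2 := Matrix.submatrix_mul_equiv (star U) U (embT T) (Equiv.refl (Fin N)) (embT T)
        simp only [Equiv.coe_refl] at h2
        rw [h2, hUU, submatrix_one_inj (embT_injective T), Matrix.det_one, mul_one]

/-- With zero-extension of kernel vectors: a PSD matrix with a singular principal submatrix is
singular. -/
lemma det_eq_zero_of_submatrix {m l : Type*} [Fintype m] [DecidableEq m] [Fintype l]
    [DecidableEq l] {M : Matrix m m ℝ} (hM : M.PosSemidef) (e : l → m)
    (he : Function.Injective e) (h : (M.submatrix e e).det = 0) : M.det = 0 := by
  obtain ⟨v, hv, hvec⟩ := Matrix.exists_mulVec_eq_zero_iff.mpr h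
  set y : m → ℝ := fun t => ∑ s : l, if e s = t then v s else 0 with hy
  have hye : ∀ s : l, y (e s) = v s := by
    intro s
    rw [hy]
    simp only [he.eq_iff]
    rw [Finset.sum_ite_eq' Finset.univ s v]
    simp
  have hynz : y ≠ 0 := by
    obtain ⟨s, hs⟩ := Function.ne_iff.mp hv
    intro h0
    apply hs
    rw [← hye s, h0]
    rfl
  have hMy : ∀ i, (M *ᵥ y) i = ∑ s : l, M i (e s) * v s := by
    intro i
    rw [Matrix.mulVec, dotProduct]
    simp only [hy, Finset.mul_sum, mul_ite, mul_zero]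
    rw [Finset.sum_comm]
    refine Finset.sum_congr rfl fun s _ => ?_
    rw [Finset.sum_ite_eq Finset.univ (e s) (fun t => M i t * v s)]
    simp
  have hquad : star y ⬝ᵥ M *ᵥ y = 0 := by
    rw [dotProduct]
    have : ∀ i, star y i * (M *ᵥ y) i = y i * (M *ᵥ y) i := fun i => by simp
    simp_rw [this, hy]
    simp only [Finset.sum_mul, ite_mul, zero_mul]
    rw [Finset.sum_comm]
    have : ∀ s : l, (∑ i : m, if e s = i then v s * (M *ᵥ y) i else 0)
        = v s * (M *ᵥ y) (e s) := by
      intro s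
      rw [Finset.sum_ite_eq Finset.univ (e s) (fun i => v s * (M *ᵥ y) i)]
      simp
    simp_rw [← hy, this, hMy]
    have : ∀ s : l, v s * (∑ t : l, M (e s) (e t) * v t) = v s * ((M.submatrix e e) *ᵥ v) s := by
      intro s
      rw [Matrix.mulVec, dotProduct]
      rfl
    simp_rw [this, hvec]
    simp
  have : M *ᵥ y = 0 := (hM.dotProduct_mulVec_zero_iff y).mp hquad
  exact Matrix.exists_mulVec_eq_zero_iff.mp ⟨y, hynz, this⟩

lemma det_subSS_mono {A : Matrix (Fin N) (Fin N) ℝ} (hA : A.PosSemidef)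
    {S T : Finset (Fin N)} (hST : S ⊆ T) (h : (subSS A S).det = 0) :
    (subSS A T).det = 0 := by
  have hpsd : (subSS A T).PosSemidef := hA.submatrix _
  refine det_eq_zero_of_submatrix hpsd
    (fun (s : {x // x ∈ S}) => (⟨s.1, hST s.2⟩ : {x // x ∈ T})) ?_ ?_
  · intro a b hab
    exact Subtype.ext (congrArg Subtype.val hab :)
  · exact h

/-- The equivalence `S ⊕ Unit ≃ insert j S` for `j ∉ S`. -/
def insertEquiv (S : Finset (Fin N)) (j : Fin N) (hj : j ∉ S) :
    ({x // x ∈ S} ⊕ Unit) ≃ {x // x ∈ insert j S} where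
  toFun := Sum.elim (fun s => ⟨s.1, Finset.mem_insert_of_mem s.2⟩)
    (fun _ => ⟨j, Finset.mem_insert_self j S⟩)
  invFun x := if h : x.1 ∈ S then Sum.inl ⟨x.1, h⟩ else Sum.inr ()
  left_inv := by
    rintro (s | ⟨⟩)
    · simp [s.2]
    · simp [hj]
  right_inv := by
    rintro ⟨x, hx⟩
    rcases Finset.mem_insert.mp hx with h | h
    · subst h
      simp [hj]
    · simp [h]

/-- Schur complement trace identity. -/
lemma schur_trace (A : Matrix (Fin N) (Fin N) ℝ) (S : Finset (Fin N))
    (hS : IsUnit (subSS A S).det) :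
    (subSS A S).det * (A - subCols A S * (subSS A S)⁻¹ * subRows A S).trace
      = ∑ j ∈ Sᶜ, (subSS A (insert j S)).det := by
  classical
  set B := subSS A S with hB
  set E := A - subCols A S * (subSS A S)⁻¹ * subRows A S with hE
  have hdiagS : ∀ j (hj : j ∈ S), E j j = 0 := by
    intro j hj
    have e1 : ∀ t, (subCols A S * B⁻¹) j t = (1 : Matrix {x // x ∈ S} {x // x ∈ S} ℝ) ⟨j, hj⟩ t := by
      intro t
      rw [← Matrix.mul_nonsing_inv B hS]
      rw [Matrix.mul_apply, Matrix.mul_apply]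
      rfl
    have e2 : (subCols A S * B⁻¹ * subRows A S) j j = A j j := by
      rw [Matrix.mul_apply]
      simp_rw [e1]
      rw [Finset.sum_congr rfl (fun t _ => by rw [Matrix.one_apply])]
      simp only [ite_mul, one_mul, zero_mul]
      rw [Finset.sum_ite_eq Finset.univ (⟨j, hj⟩ : {x // x ∈ S}) (fun t => subRows A S t j)]
      simp only [Finset.mem_univ, if_true]
      rfl
    rw [hE]
    simp only [Matrix.sub_apply]
    rw [e2, sub_self]
  have hdiagC : ∀ j, j ∉ S → B.det * E j j = (subSS A (insert j S)).det := by
    intro j hj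
    haveI : Invertible B := B.invertibleOfIsUnitDet hS
    set C' : Matrix {x // x ∈ S} Unit ℝ := fun s _ => A s.1 j with hC'
    set R' : Matrix Unit {x // x ∈ S} ℝ := fun _ s => A j s.1 with hR'
    set D' : Matrix Unit Unit ℝ := fun _ _ => A j j with hD'
    have hdet : (subSS A (insert j S)).det = (Matrix.fromBlocks B C' R' D').det := by
      rw [← Matrix.det_submatrix_equiv_self (insertEquiv S j hj) (subSS A (insert j S))]
      congr 1
      ext a b
      rcases a with s | ⟨⟩ <;> rcases b with t | ⟨⟩ <;>
        simp [subSS, Matrix.fromBlocks, insertEquiv, hB, hC', hR', hD']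
    rw [hdet, Matrix.det_fromBlocks₁₁, Matrix.invOf_eq_nonsing_inv]
    have hunit : (D' - R' * B⁻¹ * C').det = E j j := by
      rw [Matrix.det_unique]
      show D' () () - (R' * B⁻¹ * C') () () = E j j
      have hD : D' () () = A j j := rfl
      have hcross : (R' * B⁻¹ * C') () () = (subCols A S * (subSS A S)⁻¹ * subRows A S) j j := by
        rw [Matrix.mul_apply, Matrix.mul_apply]
        refine Finset.sum_congr rfl fun t _ => ?_
        rw [Matrix.mul_apply, Matrix.mul_apply]
        rfl
      rw [hD, hcross, hE]
      simp [Matrix.sub_apply]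
    rw [hunit]
  have htr : E.trace = ∑ j ∈ Sᶜ, E j j := by
    simp only [Matrix.trace, Matrix.diag]
    rw [← Finset.sum_add_sum_compl S (fun j => E j j), Finset.sum_congr rfl hdiagS]
    simp
  rw [htr, Finset.mul_sum]
  exact Finset.sum_congr rfl fun j hj => hdiagC j (Finset.mem_compl.mp hj)

lemma double_count (f : Finset (Fin N) → ℝ) :
    ∑ S ∈ Finset.powersetCard k (Finset.univ : Finset (Fin N)), ∑ j ∈ Sᶜ, f (insert j S)
      = (k + 1 : ℝ) * ∑ T ∈ Finset.powersetCard (k + 1) (Finset.univ : Finset (Fin N)), f T := by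
  classical
  have rhs : (k + 1 : ℝ) * ∑ T ∈ Finset.powersetCard (k + 1) (Finset.univ : Finset (Fin N)), f T
      = ∑ T ∈ Finset.powersetCard (k + 1) (Finset.univ : Finset (Fin N)), ∑ _j ∈ T, f T := by
    rw [Finset.mul_sum]
    refine Finset.sum_congr rfl fun T hT => ?_
    rw [Finset.sum_const, nsmul_eq_mul, (Finset.mem_powersetCard.mp hT).2]
    push_cast
    ring
  rw [rhs, Finset.sum_sigma' _ _ (fun S j => f (insert j S)),
    Finset.sum_sigma' _ _ (fun T _j => f T)]
  refine Finset.sum_nbij' (fun x => ⟨insert x.2 x.1, x.2⟩) (fun x => ⟨x.1.erase x.2, x.2⟩)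
    ?_ ?_ ?_ ?_ ?_
  · rintro ⟨S, j⟩ hx
    obtain ⟨hS, hj⟩ := Finset.mem_sigma.mp hx
    obtain ⟨-, hcard⟩ := Finset.mem_powersetCard.mp hS
    have hjS : j ∉ S := Finset.mem_compl.mp hj
    refine Finset.mem_sigma.mpr ⟨Finset.mem_powersetCard.mpr ⟨Finset.subset_univ _, ?_⟩,
      Finset.mem_insert_self _ _⟩
    rw [Finset.card_insert_of_notMem hjS, hcard]
  · rintro ⟨T, j⟩ hx
    obtain ⟨hT, hj⟩ := Finset.mem_sigma.mp hx
    obtain ⟨-, hcard⟩ := Finset.mem_powersetCard.mp hT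
    refine Finset.mem_sigma.mpr ⟨Finset.mem_powersetCard.mpr ⟨Finset.subset_univ _, ?_⟩,
      Finset.mem_compl.mpr (Finset.notMem_erase _ _)⟩
    rw [Finset.card_erase_of_mem hj, hcard]
    simp
  · rintro ⟨S, j⟩ hx
    obtain ⟨hS, hj⟩ := Finset.mem_sigma.mp hx
    have hjS : j ∉ S := Finset.mem_compl.mp hj
    exact Sigma.ext (by simp [Finset.erase_insert hjS]) (by simp)
  · rintro ⟨T, j⟩ hx
    obtain ⟨hT, hj⟩ := Finset.mem_sigma.mp hx
    exact Sigma.ext (by simp [Finset.insert_erase hj]) (by simp)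
  · rintro ⟨S, j⟩ hx
    rfl

lemma esymm_pos {lam : Fin N → ℝ} (hnn : ∀ i, 0 ≤ lam i)
    (hcard : k < (Finset.univ.filter (fun i => lam i ≠ 0)).card) :
    0 < ∑ T ∈ Finset.powersetCard k (Finset.univ : Finset (Fin N)), ∏ i ∈ T, lam i := by
  obtain ⟨T₀, hT₀sub, hT₀card⟩ :=
    Finset.exists_subset_card_eq (le_of_lt hcard)
  refine Finset.sum_pos' (fun T _ => Finset.prod_nonneg fun i _ => hnn i) ?_
  refine ⟨T₀, Finset.mem_powersetCard.mpr ⟨Finset.subset_univ _, hT₀card⟩, ?_⟩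
  refine Finset.prod_pos fun i hi => ?_
  have := (Finset.mem_filter.mp (hT₀sub hi)).2
  exact lt_of_le_of_ne (hnn i) (Ne.symm this)

end Auxiliary

/-- The expected trace-norm error of `k`-DPP sampling equals
`(k+1)·e_{k+1}(λ)/e_k(λ)`.  Subsets with singular `A(S,S)` have zero probability, so using
the (Mathlib) inverse — which agrees with the Moore–Penrose pseudoinverse on the invertible
sets — gives the same expectation. -/
theorem kdpp_expected_error {N k : ℕ} (A : Matrix (Fin N) (Fin N) ℝ)
    (hA : A.PosSemidef) (hrank : k < A.rank) :
    ∑ S ∈ Finset.powersetCard k (Finset.univ : Finset (Fin N)),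
        ((subSS A S).det /
            ∑ S' ∈ Finset.powersetCard k (Finset.univ : Finset (Fin N)), (subSS A S').det) *
          (A - subCols A S * (subSS A S)⁻¹ * subRows A S).trace
      = (k + 1) *
          (∑ T ∈ Finset.powersetCard (k + 1) (Finset.univ : Finset (Fin N)),
              ∏ i ∈ T, hA.isHermitian.eigenvalues i) /
          (∑ T ∈ Finset.powersetCard k (Finset.univ : Finset (Fin N)),
              ∏ i ∈ T, hA.isHermitian.eigenvalues i) := by
  classical
  have hEk := sum_minors_eq_esymm (k := k) A hA.isHermitian
  have hEk1 := sum_minors_eq_esymm (k := k + 1) A hA.isHermitian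
  have hcard : k < (Finset.univ.filter
      (fun i => hA.isHermitian.eigenvalues i ≠ 0)).card := by
    have h := hA.isHermitian.rank_eq_card_non_zero_eigs
    rw [h] at hrank
    simpa [Fintype.card_subtype] using hrank
  have hpos : 0 < ∑ T ∈ Finset.powersetCard k (Finset.univ : Finset (Fin N)),
      ∏ i ∈ T, hA.isHermitian.eigenvalues i :=
    esymm_pos (fun i => hA.eigenvalues_nonneg i) hcard
  have hnum : ∑ S ∈ Finset.powersetCard k (Finset.univ : Finset (Fin N)),
      (subSS A S).det * (A - subCols A S * (subSS A S)⁻¹ * subRows A S).trace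
      = (k + 1 : ℝ) * ∑ T ∈ Finset.powersetCard (k + 1) (Finset.univ : Finset (Fin N)),
          (subSS A T).det := by
    rw [← double_count (fun T => (subSS A T).det)]
    refine Finset.sum_congr rfl fun S _ => ?_
    by_cases hu : IsUnit (subSS A S).det
    · exact schur_trace A S hu
    · have h0 : (subSS A S).det = 0 := by
        simpa [isUnit_iff_ne_zero, not_not] using hu
      rw [h0, zero_mul]
      exact (Finset.sum_eq_zero fun j _ =>
        det_subSS_mono hA (Finset.subset_insert j S) h0).symm
  calc ∑ S ∈ Finset.powersetCard k (Finset.univ : Finset (Fin N)),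
        ((subSS A S).det /
            ∑ S' ∈ Finset.powersetCard k (Finset.univ : Finset (Fin N)), (subSS A S').det) *
          (A - subCols A S * (subSS A S)⁻¹ * subRows A S).trace
      = (∑ S ∈ Finset.powersetCard k (Finset.univ : Finset (Fin N)),
          (subSS A S).det * (A - subCols A S * (subSS A S)⁻¹ * subRows A S).trace) /
          (∑ S' ∈ Finset.powersetCard k (Finset.univ : Finset (Fin N)), (subSS A S').det) := by
        rw [Finset.sum_div]
        exact Finset.sum_congr rfl fun S _ => div_mul_eq_mul_div _ _ _
    _ = ((k + 1 : ℝ) * ∑ T ∈ Finset.powersetCard (k + 1) (Finset.univ : Finset (Fin N)),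
          ∏ i ∈ T, hA.isHermitian.eigenvalues i) /
          (∑ T ∈ Finset.powersetCard k (Finset.univ : Finset (Fin N)),
              ∏ i ∈ T, hA.isHermitian.eigenvalues i) := by
        rw [hnum, hEk1, hEk]
    _ = _ := by push_cast; ring
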